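/- Let n ≥ 1 and let N be a commutative ℂ-subalgebra of Mat_n(ℂ) that is closed under conjugate transpose. Let N' be the centralizer of N in Mat_n(ℂ) and N'' the centralizer of N' in Mat_n(ℂ). Then N'' = N (finite-dimensional von Neumann bicommutant theorem in this setting). -/

import Mathlib

open Matrix

namespace BicommAux

variable {n : ℕ}

/-- The identification of matrices with the Euclidean space on `Fin n × Fin n`. -/
noncomputable def e (n : ℕ) : Matrix (Fin n) (Fin n) ℂ ≃ₗ[ℂ] EuclideanSpace ℂ (Fin n × Fin n) where
  toFun m := WithLp.toLp 2 (fun ij => m ij.1 ij.2)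
  invFun v := fun i j => v (i, j)
  map_add' := by intros; rfl
  map_smul' := by intros; rfl
  left_inv := fun m => rfl
  right_inv := fun v => rfl

@[simp] lemma e_apply (m : Matrix (Fin n) (Fin n) ℂ) (ij : Fin n × Fin n) :
    e n m ij = m ij.1 ij.2 := rfl

@[simp] lemma e_symm_apply (v : EuclideanSpace ℂ (Fin n × Fin n)) (i j : Fin n) :
    (e n).symm v i j = v (i, j) := rfl

lemma inner_e (m₁ m₂ : Matrix (Fin n) (Fin n) ℂ) :
    (inner ℂ (e n m₁) (e n m₂) : ℂ) = (m₁ᴴ * m₂).trace := by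
  simp only [PiLp.inner_apply, RCLike.inner_apply, e_apply, Matrix.trace, Matrix.diag,
    Matrix.mul_apply, Matrix.conjTranspose_apply, Fintype.sum_prod_type]
  rw [Finset.sum_comm]
  exact Finset.sum_congr rfl fun _ _ => Finset.sum_congr rfl fun _ _ => mul_comm _ _

lemma mul_stdBasisMatrix (a : Matrix (Fin n) (Fin n) ℂ) (l k : Fin n) :
    a * Matrix.single l k (1 : ℂ) = ∑ p, a p l • Matrix.single p k (1 : ℂ) := by
  ext i j
  simp only [Matrix.mul_apply, Matrix.sum_apply, Matrix.smul_apply, Matrix.single,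
    Matrix.of_apply, smul_eq_mul, mul_ite, mul_one, mul_zero, ite_and]
  rcases eq_or_ne j k with rfl | h
  · simp [Finset.sum_ite_eq, Finset.sum_ite_eq']
  · simp [h, Ne.symm h]

end BicommAux

open BicommAux

theorem bicommutant_eq (n : ℕ) (hn : 1 ≤ n)
    (N : Subalgebra ℂ (Matrix (Fin n) (Fin n) ℂ))
    (hcomm : ∀ x ∈ N, ∀ y ∈ N, x * y = y * x)
    (hstar : ∀ y ∈ N, yᴴ ∈ N) :
    Subalgebra.centralizer ℂ
      ((Subalgebra.centralizer ℂ (N : Set (Matrix (Fin n) (Fin n) ℂ)) :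
          Subalgebra ℂ (Matrix (Fin n) (Fin n) ℂ)) :
        Set (Matrix (Fin n) (Fin n) ℂ)) = N := by
  apply le_antisymm
  · intro x hx
    rw [Subalgebra.mem_centralizer_iff] at hx
    -- setup
    set V := EuclideanSpace ℂ (Fin n × Fin n)
    set S : Submodule ℂ V := N.toSubmodule.map (e n).toLinearMap with hS
    have memS : ∀ m : Matrix (Fin n) (Fin n) ℂ, e n m ∈ S ↔ m ∈ N := by
      intro m
      constructor
      · rintro ⟨m', hm', hmm⟩
        simp only [LinearEquiv.coe_coe] at hmm
        rwa [← (e n).injective hmm]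
      · intro hm; exact ⟨m, hm, rfl⟩
    -- the compressed orthogonal projection, as a map on matrices
    set Q : Matrix (Fin n) (Fin n) ℂ →ₗ[ℂ] Matrix (Fin n) (Fin n) ℂ :=
      (e n).symm.toLinearMap ∘ₗ S.subtype ∘ₗ (Submodule.orthogonalProjectionOnto S).toLinearMap
        ∘ₗ (e n).toLinearMap with hQ
    have hQapply : ∀ m, Q m = (e n).symm (Submodule.orthogonalProjectionOnto S (e n m) : V) := fun m => rfl
    -- Q lands in N
    have hQmem : ∀ m, Q m ∈ N := by
      intro m
      obtain ⟨m', hm', hmm⟩ := (Submodule.orthogonalProjectionOnto S (e n m)).2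
      simp only [LinearEquiv.coe_coe] at hmm
      rw [hQapply, ← hmm, (e n).symm_apply_apply]
      exact hm'
    -- Q is the identity on N
    have hQid : ∀ m ∈ N, Q m = m := by
      intro m hm
      rw [hQapply, ← Submodule.starProjection_apply, Submodule.starProjection_eq_self_iff.mpr ((memS m).2 hm)]
      exact (e n).symm_apply_apply m
    -- Sᗮ is invariant under left multiplication by elements of N
    have hperp : ∀ a ∈ N, ∀ v ∈ Sᗮ, e n (a * (e n).symm v) ∈ Sᗮ := by
      intro a ha v hv
      rw [Submodule.mem_orthogonal]
      rintro u ⟨m, hm, rfl⟩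
      simp only [LinearEquiv.coe_coe]
      have key : (inner ℂ (e n m) (e n (a * (e n).symm v)) : ℂ)
          = inner ℂ (e n (aᴴ * m)) (e n ((e n).symm v)) := by
        rw [inner_e, inner_e, Matrix.conjTranspose_mul, Matrix.conjTranspose_conjTranspose,
          Matrix.mul_assoc]
      rw [key, (e n).apply_symm_apply]
      exact (Submodule.mem_orthogonal S v).mp hv (e n (aᴴ * m))
        ((memS _).2 (N.mul_mem (hstar a ha) hm))
    -- Q intertwines left multiplication by elements of N
    have hQcomm : ∀ a ∈ N, ∀ m, Q (a * m) = a * Q m := by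
      intro a ha m
      have hm0 : m = Q m + (e n).symm (e n m - (Submodule.orthogonalProjectionOnto S (e n m) : V)) := by
        rw [hQapply, ← map_add, add_sub_cancel, (e n).symm_apply_apply]
      have h1 : e n (a * Q m) ∈ S := (memS _).2 (N.mul_mem ha (hQmem m))
      have h2 : e n (a * (e n).symm (e n m - (Submodule.orthogonalProjectionOnto S (e n m) : V))) ∈ Sᗮ :=
        hperp a ha _ (by rw [← Submodule.starProjection_apply]; exact Submodule.sub_starProjection_mem_orthogonal _)
      conv_lhs => rw [hQapply, hm0, mul_add, map_add]
      rw [map_add, Submodule.coe_add, ← Submodule.starProjection_apply, Submodule.starProjection_eq_self_iff.2 h1,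
        Submodule.orthogonalProjectionOnto_apply_of_mem_orthogonal h2,
        ZeroMemClass.coe_zero, add_zero, (e n).symm_apply_apply]
    -- the blocks of Q
    set B : Fin n → Fin n → Matrix (Fin n) (Fin n) ℂ :=
      fun j k => Matrix.of (fun i l => Q (Matrix.single l k (1 : ℂ)) i j) with hB
    have blockL : ∀ (y : Matrix (Fin n) (Fin n) ℂ) (j k i l : Fin n),
        Q (y * Matrix.single l k 1) i j = (B j k * y) i l := by
      intro y j k i l
      rw [mul_stdBasisMatrix, map_sum]
      simp only [_root_.map_smul]
      rw [Matrix.sum_apply]  -- evaluate sum of matrices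
      simp only [Matrix.smul_apply, smul_eq_mul, Matrix.mul_apply, hB, Matrix.of_apply]
      exact Finset.sum_congr rfl (fun p _ => mul_comm _ _)
    have blockR : ∀ (y : Matrix (Fin n) (Fin n) ℂ) (j k i l : Fin n),
        (y * Q (Matrix.single l k 1)) i j = (y * B j k) i l := by
      intro y j k i l
      simp only [Matrix.mul_apply, hB, Matrix.of_apply]
    -- each block centralizes N
    have hBmem : ∀ j k, B j k ∈ Subalgebra.centralizer ℂ (N : Set _) := by
      intro j k
      rw [Subalgebra.mem_centralizer_iff]
      intro a ha
      ext i l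
      rw [← blockL a j k i l, ← blockR a j k i l, hQcomm a ha]
    -- hence x commutes with each block, so Q intertwines x on basis matrices
    have hQx : ∀ l k, Q (x * Matrix.single l k 1) = x * Q (Matrix.single l k 1) := by
      intro l k
      ext i j
      rw [blockL x j k i l, blockR x j k i l, hx (B j k) (hBmem j k)]
    -- conclude
    have hone : (1 : Matrix (Fin n) (Fin n) ℂ) = ∑ l, Matrix.single l l (1 : ℂ) := by
      ext i j
      rcases eq_or_ne i j with rfl | h
      · simp [Matrix.sum_apply, Matrix.single, Matrix.one_apply, ite_and]
      · simp [Matrix.sum_apply, Matrix.single, Matrix.one_apply, ite_and, h]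
    have : Q x = x := by
      conv_lhs => rw [show x = x * 1 from (mul_one x).symm, hone, Finset.mul_sum, map_sum]
      simp only [hQx]
      rw [← Finset.mul_sum, ← map_sum, ← hone, hQid 1 N.one_mem, mul_one]
    rw [← this]
    exact hQmem x
  · -- N ⊆ N''
    intro y hy
    rw [Subalgebra.mem_centralizer_iff]
    intro z hz
    exact (hz y hy).symm
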